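/- In the free group F_r with r ≥ 3, for every k ≥ 1 the word x_1^k x_2^k ... x_r^k is not primitivity-blocking: there exists a cyclically reduced primitive element of F_r containing x_1^k x_2^k ... x_r^k as a subword. -/

import Mathlib

open FreeGroup

/-- The free group of rank `r` on the basis `Fin r`. -/
abbrev F (r : ℕ) := FreeGroup (Fin r)

/-- `v` is a subword of `u`: the reduced word of `v` occurs as a contiguous
block of the reduced word of `u`. -/
def Subword {α : Type*} [DecidableEq α] (v u : FreeGroup α) : Prop :=
  v.toWord <:+: u.toWord

/-- `u` is cyclically reduced: the first letter of its reduced word is not the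
inverse of its last letter. -/
def CyclRed {α : Type*} [DecidableEq α] (u : FreeGroup α) : Prop :=
  ∀ a ∈ u.toWord.head?, ∀ b ∈ u.toWord.getLast?, a ≠ (b.1, !b.2)

/-- `u` is primitive: some automorphism sends a generator to `u`
(equivalently, `u` belongs to a basis). -/
def IsPrimitive {α : Type*} [DecidableEq α] (u : FreeGroup α) : Prop :=
  ∃ (φ : FreeGroup α ≃* FreeGroup α) (i : α), φ (FreeGroup.of i) = u

/-- `v` is primitivity-blocking: it is not a subword of any cyclically reduced
primitive element. -/
def PrimitivityBlocking {α : Type*} [DecidableEq α] (v : FreeGroup α) : Prop :=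
  ∀ u : FreeGroup α, IsPrimitive u → CyclRed u → ¬ Subword v u

/-- Reduced word length. -/
def len {α : Type*} [DecidableEq α] (u : FreeGroup α) : ℕ := u.toWord.length

/-- `v` is `w`-orbit-blocking: for every automorphism `φ`, `v` is not a subword
of the cyclic reduction of `φ w` (i.e. of any cyclically reduced element
conjugate to `φ w`). -/
def OrbitBlocking {α : Type*} [DecidableEq α] (w v : FreeGroup α) : Prop :=
  ∀ (φ : FreeGroup α ≃* FreeGroup α) (c : FreeGroup α),
    CyclRed c → IsConj c (φ w) → ¬ Subword v c

/-- A word is slender if some generator occurs (with exponent `±1`) at most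
once in its reduced word. -/
def Slender {α : Type*} [DecidableEq α] (w : FreeGroup α) : Prop :=
  ∃ x : α, (w.toWord.countP fun p => decide (p.1 = x)) ≤ 1

set_option linter.dupNamespace false

namespace S4
open List


/-- No-cancellation relation on letters. -/
def RR {α : Type*} : (α × Bool) → (α × Bool) → Prop := fun p q => p.1 ≠ q.1 ∨ p.2 = q.2

theorem reduce_eq_self {α : Type*} [DecidableEq α] :
    ∀ {L : List (α × Bool)}, L.Chain' RR → FreeGroup.reduce L = L := by
  intro L h
  induction L with
  | nil => rfl
  | cons x L ih =>
    have hL := h.tail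
    rw [FreeGroup.reduce.cons, ih hL]
    cases L with
    | nil => rfl
    | cons y t =>
      have hxy : RR x y := (List.isChain_cons_cons.1 h).1
      show (if x.1 = y.1 ∧ x.2 = !y.2 then t else x :: y :: t) = x :: y :: t
      rw [if_neg]
      rintro ⟨h1, h2⟩
      rcases hxy with h3 | h3
      · exact h3 h1
      · rw [h3] at h2; exact (Bool.not_ne_self y.2 h2.symm).elim

/-- Elementary endomorphism: sends `of a` to `L * of a * R`, fixes other generators. -/
def eHom {α : Type*} [DecidableEq α] (a : α) (L R : FreeGroup α) : FreeGroup α →* FreeGroup α :=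
  FreeGroup.lift fun j => if j = a then L * FreeGroup.of j * R else FreeGroup.of j

@[simp] theorem eHom_of_ne {α : Type*} [DecidableEq α] {a j : α} (L R : FreeGroup α) (h : j ≠ a) :
    eHom a L R (of j) = of j := by simp [eHom, h]

@[simp] theorem eHom_of_self {α : Type*} [DecidableEq α] (a : α) (L R : FreeGroup α) :
    eHom a L R (of a) = L * of a * R := by simp [eHom]

/-- Conjugating automorphism `of a ↦ of b ^ k * of a * of b ^ (-k)`. -/
def conjA {α : Type*} [DecidableEq α] (a b : α) (h : b ≠ a) (k : ℕ) :
    FreeGroup α ≃* FreeGroup α :=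
  MonoidHom.toMulEquiv (eHom a (of b ^ k) (of b ^ k)⁻¹) (eHom a (of b ^ k)⁻¹ (of b ^ k))
    (by
      apply FreeGroup.ext_hom
      intro j
      by_cases hj : j = a
      · subst hj
        simp only [MonoidHom.comp_apply, eHom_of_self, _root_.map_mul, _root_.map_inv, _root_.map_pow,
          eHom_of_ne _ _ h, MonoidHom.id_apply]
        group
      · simp [MonoidHom.comp_apply, eHom_of_ne _ _ hj])
    (by
      apply FreeGroup.ext_hom
      intro j
      by_cases hj : j = a
      · subst hj
        simp only [MonoidHom.comp_apply, eHom_of_self, _root_.map_mul, _root_.map_inv, _root_.map_pow,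
          eHom_of_ne _ _ h, MonoidHom.id_apply]
        group
      · simp [MonoidHom.comp_apply, eHom_of_ne _ _ hj])

@[simp] theorem conjA_of_ne {α : Type*} [DecidableEq α] {a b j : α} (h : b ≠ a) (k : ℕ)
    (hj : j ≠ a) : conjA a b h k (of j) = of j :=
  eHom_of_ne _ _ hj

@[simp] theorem conjA_of_self {α : Type*} [DecidableEq α] {a b : α} (h : b ≠ a) (k : ℕ) :
    conjA a b h k (of a) = of b ^ k * of a * (of b ^ k)⁻¹ :=
  eHom_of_self _ _ _

/-- Transvection automorphism `of a ↦ of b ^ k * of a`. -/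
def transA {α : Type*} [DecidableEq α] (a b : α) (h : b ≠ a) (k : ℕ) :
    FreeGroup α ≃* FreeGroup α :=
  MonoidHom.toMulEquiv (eHom a (of b ^ k) 1) (eHom a (of b ^ k)⁻¹ 1)
    (by
      apply FreeGroup.ext_hom
      intro j
      by_cases hj : j = a
      · subst hj
        simp only [MonoidHom.comp_apply, eHom_of_self, _root_.map_mul, _root_.map_inv, _root_.map_pow,
          eHom_of_ne _ _ h, MonoidHom.id_apply, _root_.map_one]
        group
      · simp [MonoidHom.comp_apply, eHom_of_ne _ _ hj])
    (by
      apply FreeGroup.ext_hom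
      intro j
      by_cases hj : j = a
      · subst hj
        simp only [MonoidHom.comp_apply, eHom_of_self, _root_.map_mul, _root_.map_inv, _root_.map_pow,
          eHom_of_ne _ _ h, MonoidHom.id_apply, _root_.map_one]
        group
      · simp [MonoidHom.comp_apply, eHom_of_ne _ _ hj])

@[simp] theorem transA_of_self {α : Type*} [DecidableEq α] {a b : α} (h : b ≠ a) (k : ℕ) :
    transA a b h k (of a) = of b ^ k * of a := by
  show eHom a (of b ^ k) 1 (of a) = _
  simp


variable (r k : ℕ)

/-- Block of `k` copies of letter `i` with sign `b`. -/
def blockL (i : ℕ) (b : Bool) : List (Fin r × Bool) :=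
  if h : i < r then List.replicate k ((⟨i, h⟩ : Fin r), b) else []

/-- Ascending word `x_0^k ⋯ x_{m-1}^k` as a letter list. -/
def AscL (m : ℕ) : List (Fin r × Bool) :=
  ((List.range m).map fun i => blockL r k i true).flatten

/-- Descending inverse word `x_{m-1}^{-k} ⋯ x_0^{-k}` as a letter list. -/
def DescL (m : ℕ) : List (Fin r × Bool) :=
  ((List.range m).reverse.map fun i => blockL r k i false).flatten

/-- The group element `x_0^k ⋯ x_{m-1}^k`. -/
def DD (m : ℕ) : FreeGroup (Fin r) := FreeGroup.mk (AscL r k m)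

theorem AscL_succ (m : ℕ) : AscL r k (m + 1) = AscL r k m ++ blockL r k m true := by
  simp [AscL, List.range_succ]

theorem DescL_succ (m : ℕ) : DescL r k (m + 1) = blockL r k m false ++ DescL r k m := by
  simp [DescL, List.range_succ]

theorem invRev_blockL (i : ℕ) : invRev (blockL r k i true) = blockL r k i false := by
  by_cases h : i < r <;> simp [blockL, h, invRev]

theorem invRev_AscL (m : ℕ) : invRev (AscL r k m) = DescL r k m := by
  induction m with
  | zero => simp [AscL, DescL, invRev]
  | succ m ih =>
    rw [AscL_succ, DescL_succ, ← ih, ← invRev_blockL r k m]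
    simp [invRev, List.reverse_append]

theorem mk_replicate (x : Fin r) :
    FreeGroup.mk (List.replicate k (x, true)) = of x ^ k := by
  rw [← FreeGroup.toWord_of_pow, FreeGroup.mk_toWord]

theorem mk_blockL {m : ℕ} (h : m < r) :
    FreeGroup.mk (blockL r k m true) = of (⟨m, h⟩ : Fin r) ^ k := by
  rw [blockL, dif_pos h, mk_replicate]

theorem DD_zero : DD r k 0 = 1 := by
  simp [DD, AscL, FreeGroup.one_eq_mk]

theorem DD_succ {m : ℕ} (h : m < r) :
    DD r k (m + 1) = DD r k m * of (⟨m, h⟩ : Fin r) ^ k := by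
  rw [DD, DD, AscL_succ, ← FreeGroup.mul_mk, mk_blockL r k h]

variable {k}

theorem asc_facts (hk : 1 ≤ k) : ∀ m, (hm1 : 1 ≤ m) → (hmr : m ≤ r) →
    Chain' RR (AscL r k m) ∧ (AscL r k m).head? = some (⟨0, by omega⟩, true) ∧
      (AscL r k m).getLast? = some (⟨m - 1, by omega⟩, true) := by
  intro m
  induction m with
  | zero => omega
  | succ m ih =>
    intro _ hmr
    rw [AscL_succ]
    have hb : blockL r k m true = List.replicate k ((⟨m, by omega⟩ : Fin r), true) := by
      rw [blockL, dif_pos (by omega)]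
    have hbne : blockL r k m true ≠ [] := by
      rw [hb]; simp; omega
    have hbh : (blockL r k m true).head? = some ((⟨m, by omega⟩ : Fin r), true) := by
      rw [hb]; cases k with | zero => omega | succ n => simp [List.replicate_succ]
    have hbl : (blockL r k m true).getLast? = some ((⟨m, by omega⟩ : Fin r), true) := by
      rw [hb, List.getLast?_replicate]; simp; omega
    have hbc : Chain' RR (blockL r k m true) := by
      rw [hb]; exact List.isChain_replicate_of_rel _ (Or.inr rfl)
    rcases Nat.eq_zero_or_pos m with hm0 | hm1
    · subst hm0
      simp only [AscL, List.range_zero, List.map_nil, List.flatten_nil, List.nil_append]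
      exact ⟨hbc, hbh, hbl⟩
    · obtain ⟨hc, hh, hl⟩ := ih hm1 (by omega)
      refine ⟨?_, ?_, ?_⟩
      · rw [List.Chain', List.isChain_append]
        refine ⟨hc, hbc, ?_⟩
        intro x hx y hy
        rw [hl] at hx; rw [hbh] at hy
        simp only [Option.mem_def, Option.some.injEq] at hx hy
        subst hx; subst hy
        left
        simp only [ne_eq, Fin.mk.injEq]
        omega
      · rw [List.head?_append_of_ne_nil]
        · exact hh
        · intro hnil; rw [hnil] at hh; simp at hh
      · rw [List.getLast?_append_of_ne_nil _ hbne, hbl]; simp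

theorem desc_facts (hk : 1 ≤ k) : ∀ m, (hm1 : 1 ≤ m) → (hmr : m ≤ r) →
    Chain' RR (DescL r k m) ∧ (DescL r k m).head? = some (⟨m - 1, by omega⟩, false) ∧
      (DescL r k m).getLast? = some (⟨0, by omega⟩, false) := by
  intro m h1 hmr
  obtain ⟨hc, hh, hl⟩ := asc_facts r hk m h1 hmr
  rw [← invRev_AscL]
  have hrr : ∀ p q : Fin r × Bool, RR p q → RR (q.1, !q.2) (p.1, !p.2) := by
    rintro ⟨p1, p2⟩ ⟨q1, q2⟩ (h | h)
    · exact Or.inl (Ne.symm h)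
    · exact Or.inr (by rw [← h])
  refine ⟨?_, ?_, ?_⟩
  · rw [invRev, List.Chain', List.isChain_reverse]
    exact (List.isChain_map _).2 (hc.imp fun a b hab => hrr _ _ hab)
  · rw [invRev, List.head?_reverse, List.getLast?_map, hl]
    rfl
  · rw [invRev, List.getLast?_reverse, List.head?_map, hh]
    rfl

theorem ofFn_prod : ∀ m (h : m ≤ r),
    (List.ofFn fun i : Fin m => (of (Fin.castLE h i) : FreeGroup (Fin r)) ^ k).prod = DD r k m := by
  intro m
  induction m with
  | zero => intro h; simp [DD_zero]
  | succ m ih =>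
    intro h
    rw [List.ofFn_succ', List.prod_concat]
    have h' : m ≤ r := by omega
    have hfe : (fun i : Fin m => (of (Fin.castLE h i.castSucc) : FreeGroup (Fin r)) ^ k)
        = fun i : Fin m => (of (Fin.castLE h' i) : FreeGroup (Fin r)) ^ k := by
      funext i; congr 1
    have hl : (Fin.castLE h (Fin.last m)) = (⟨m, by omega⟩ : Fin r) := rfl
    rw [hfe, ih h', hl, DD_succ r k (show m < r by omega)]

attribute [irreducible] eHom conjA transA

theorem hom_fix_DD (φ : FreeGroup (Fin r) →* FreeGroup (Fin r)) :
    ∀ m, m ≤ r → (∀ i (hi : i < r), i < m → φ (of ⟨i, hi⟩) = of ⟨i, hi⟩) →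
      φ (DD r k m) = DD r k m := by
  intro m
  induction m with
  | zero => intro _ _; rw [DD_zero, _root_.map_one]
  | succ m ih =>
    intro hmr hfix
    rw [DD_succ r k (show m < r by omega), _root_.map_mul, _root_.map_pow,
      ih (by omega) (fun i hi him => hfix i hi (by omega)),
      hfix m (by omega) (by omega)]

section Key

variable (hr : 3 ≤ r)
include hr

theorem key (a one : Fin r) (hav : (a : ℕ) = r - 1) (h1v : (one : ℕ) = 1) :
    ∀ m, m ≤ r - 1 →
    ∃ φ : FreeGroup (Fin r) ≃* FreeGroup (Fin r),
      φ (of a ^ k * of one) = DD r k m * of a ^ k * (DD r k m)⁻¹ * of one := by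
  intro m
  induction m with
  | zero =>
    intro _
    exact ⟨MulEquiv.refl _, by simp [DD_zero]⟩
  | succ m ih =>
    intro hm
    obtain ⟨φ, hφ⟩ := ih (by omega)
    have hmr : m < r := by omega
    have hba : (⟨m, hmr⟩ : Fin r) ≠ a := Fin.ne_of_val_ne (by simp; omega)
    have hone : one ≠ a := Fin.ne_of_val_ne (by omega)
    have hDD : conjA a ⟨m, hmr⟩ hba k (DD r k m) = DD r k m := by
      have := hom_fix_DD r (k := k) (conjA a ⟨m, hmr⟩ hba k).toMonoidHom m (by omega)
        (fun i hi him => conjA_of_ne hba k (Fin.ne_of_val_ne (by simp; omega)))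
      simpa using this
    refine ⟨φ.trans (conjA a ⟨m, hmr⟩ hba k), ?_⟩
    have e2 : conjA a ⟨m, hmr⟩ hba k
        (DD r k m * of a ^ k * (DD r k m)⁻¹ * of one)
        = DD r k (m + 1) * of a ^ k * (DD r k (m + 1))⁻¹ * of one := by
      rw [_root_.map_mul, _root_.map_mul, _root_.map_mul, _root_.map_inv, _root_.map_pow,
        conjA_of_self hba k, hDD, conjA_of_ne hba k hone, _root_.conj_pow, DD_succ r k hmr]
      group
    exact (MulEquiv.trans_apply _ _ _).trans
      ((congrArg (conjA a ⟨m, hmr⟩ hba k) hφ).trans e2)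

end Key

end S4


/-- `x1^k ⋯ xr^k` is not primitivity-blocking in `F_r`, `r ≥ 3`. -/
theorem stmt4 (r k : ℕ) (hr : 3 ≤ r) (hk : 1 ≤ k) :
    ∃ p : F r, IsPrimitive p ∧ CyclRed p ∧
      Subword ((List.ofFn fun i : Fin r => FreeGroup.of i ^ k).prod) p := by
  classical
  have h0r : 0 < r := by omega
  have h1r : 1 < r := by omega
  have hr1r : r - 1 < r := by omega
  have hr1 : r - 1 + 1 = r := by omega
  set a : Fin r := ⟨r - 1, hr1r⟩ with ha
  set one : Fin r := ⟨1, h1r⟩ with hone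
  obtain ⟨φ, hφ⟩ := S4.key r (k := k) hr a one rfl rfl (r - 1) le_rfl
  have haone : a ≠ one := Fin.ne_of_val_ne (by simp [ha, hone]; omega)
  set ψ := S4.transA one a haone k with hψ
  set p : FreeGroup (Fin r) :=
    S4.DD r k (r - 1) * of a ^ k * (S4.DD r k (r - 1))⁻¹ * of one with hpdef
  have hp : (ψ.trans φ) (of one) = p := by
    rw [MulEquiv.trans_apply, hψ, S4.transA_of_self haone k, hφ]
  have hAsc : S4.AscL r k r = S4.AscL r k (r - 1) ++ S4.blockL r k (r - 1) true := by
    have h := S4.AscL_succ r k (r - 1)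
    rw [hr1] at h
    exact h
  set Lw : List (Fin r × Bool) :=
    S4.AscL r k r ++ (S4.DescL r k (r - 1) ++ [(one, true)]) with hLw
  have hpmk : p = FreeGroup.mk Lw := by
    rw [hLw, hAsc, ← FreeGroup.mul_mk, ← FreeGroup.mul_mk, ← FreeGroup.mul_mk,
      S4.mk_blockL r k hr1r, ← S4.invRev_AscL, ← FreeGroup.inv_mk, hpdef]
    show _ = S4.DD r k (r - 1) * of a ^ k * ((S4.DD r k (r - 1))⁻¹ * FreeGroup.mk [(one, true)])
    rw [show FreeGroup.mk [(one, true)] = of one from rfl]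
    group
  -- chain facts
  obtain ⟨ca, hah, hal⟩ := S4.asc_facts r (k := k) hk r h0r le_rfl
  obtain ⟨cd, hdh, hdl⟩ := S4.desc_facts r (k := k) hk (r - 1) (by omega) (by omega)
  have hdesc_ne : S4.DescL r k (r - 1) ≠ [] := by
    intro hnil; rw [hnil] at hdh; simp at hdh
  have hchain : List.Chain' S4.RR Lw := by
    rw [hLw, List.Chain', List.isChain_append]
    refine ⟨ca, ?_, ?_⟩
    · rw [List.isChain_append]
      refine ⟨cd, List.isChain_singleton _, ?_⟩
      intro x hx y hy
      rw [hdl] at hx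
      simp only [List.head?_cons, Option.mem_def, Option.some.injEq] at hx hy
      subst hx; subst hy
      exact Or.inl (Fin.ne_of_val_ne (by simp [hone]))
    · intro x hx y hy
      rw [hal] at hx
      rw [List.head?_append_of_ne_nil _ hdesc_ne, hdh] at hy
      simp only [Option.mem_def, Option.some.injEq] at hx hy
      subst hx; subst hy
      exact Or.inl (Fin.ne_of_val_ne (by simp; omega))
  have hpword : p.toWord = Lw := by
    rw [hpmk, FreeGroup.toWord_mk, S4.reduce_eq_self hchain]
  have hW : (List.ofFn fun i : Fin r => FreeGroup.of i ^ k).prod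
      = FreeGroup.mk (S4.AscL r k r) := by
    show _ = S4.DD r k r
    rw [← S4.ofFn_prod r (k := k) r le_rfl]
    have hfe : (fun i : Fin r => (FreeGroup.of (Fin.castLE le_rfl i) : F r) ^ k)
        = fun i : Fin r => FreeGroup.of i ^ k := by
      funext i; rfl
    rw [hfe]
  have hWword : ((List.ofFn fun i : Fin r => FreeGroup.of i ^ k).prod).toWord
      = S4.AscL r k r := by
    rw [hW, FreeGroup.toWord_mk, S4.reduce_eq_self ca]
  refine ⟨p, ⟨ψ.trans φ, one, hp⟩, ?_, ?_⟩
  · intro x hx y hy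
    rw [hpword] at hx hy
    rw [hLw] at hx hy
    have hasc_ne : S4.AscL r k r ≠ [] := by
      intro hnil; rw [hnil] at hah; simp at hah
    rw [List.head?_append_of_ne_nil _ hasc_ne, hah] at hx
    rw [← List.append_assoc, List.getLast?_concat] at hy
    simp only [Option.mem_def, Option.some.injEq] at hx hy
    subst hx; subst hy
    simp
  · show _ <:+: _
    rw [hpword, hWword, hLw]
    exact ⟨[], S4.DescL r k (r - 1) ++ [(one, true)], by simp⟩
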